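/- (Muirhead's inequality.) Let a = (a₁,…,aₙ) and b = (b₁,…,bₙ) be decreasing vectors of nonnegative real numbers such that b is strictly majorized by a, i.e., Σ_{i=1}^k b_i ≤ Σ_{i=1}^k a_i for all k ∈ {1,…,n−1}, Σ_{i=1}^n b_i = Σ_{i=1}^n a_i, and b ≠ a. Then for every nonconstant positive vector x ∈ ℝⁿ, [x^b]_{Sₙ} < [x^a]_{Sₙ}. -/

import Mathlib

open Real

lemma pair_diff (u v q α t : ℝ) (hu : 0 < u) (hv : 0 < v) :
    (u ^ ((q+α)+t) * v ^ q + u ^ q * v ^ ((q+α)+t))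
      - (u ^ (q+α) * v ^ (q+t) + u ^ (q+t) * v ^ (q+α))
    = (u ^ q * v ^ q) * ((u ^ α - v ^ α) * (u ^ t - v ^ t)) := by
  rw [rpow_add hu, rpow_add hu, rpow_add hu, rpow_add hv, rpow_add hv, rpow_add hv]
  ring

lemma pair_le (u v p q p' q' : ℝ) (hu : 0 < u) (hv : 0 < v)
    (hq : q ≤ q') (hm : q' ≤ p') (hp : p' ≤ p) (hs : p + q = p' + q') :
    u ^ p' * v ^ q' + u ^ q' * v ^ p' ≤ u ^ p * v ^ q + u ^ q * v ^ p := by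
  have hα : 0 ≤ p' - q := le_trans (by linarith) (by linarith : q' - q ≤ p' - q)
  have ht : 0 ≤ p - p' := by linarith
  have hte : p - p' = q' - q := by linarith
  have h1 := pair_diff u v q (p' - q) (p - p') hu hv
  have e1 : (q + (p' - q)) + (p - p') = p := by ring
  have e2 : q + (p' - q) = p' := by ring
  have e3 : q + (p - p') = q' := by linarith
  rw [e1, e2, e3] at h1
  have hsign : 0 ≤ (u ^ (p' - q) - v ^ (p' - q)) * (u ^ (p - p') - v ^ (p - p')) := by
    rcases le_total u v with h | h
    · exact mul_nonneg_of_nonpos_of_nonpos (by nlinarith [rpow_le_rpow hu.le h hα])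
        (by nlinarith [rpow_le_rpow hu.le h ht])
    · exact mul_nonneg (by nlinarith [rpow_le_rpow hv.le h hα])
        (by nlinarith [rpow_le_rpow hv.le h ht])
  nlinarith [mul_pos (rpow_pos_of_pos hu q) (rpow_pos_of_pos hv q), mul_nonneg (mul_pos (rpow_pos_of_pos hu q) (rpow_pos_of_pos hv q)).le hsign]

lemma pair_lt (u v p q p' q' : ℝ) (hu : 0 < u) (hv : 0 < v)
    (hq : q ≤ q') (hm : q' ≤ p') (hp : p' < p) (hs : p + q = p' + q') (huv : u ≠ v) :
    u ^ p' * v ^ q' + u ^ q' * v ^ p' < u ^ p * v ^ q + u ^ q * v ^ p := by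
  have ht : 0 < p - p' := by linarith
  have hα : 0 < p' - q := lt_of_lt_of_le (by linarith : (0:ℝ) < q' - q) (by linarith)
  have h1 := pair_diff u v q (p' - q) (p - p') hu hv
  have e1 : (q + (p' - q)) + (p - p') = p := by ring
  have e2 : q + (p' - q) = p' := by ring
  have e3 : q + (p - p') = q' := by linarith
  rw [e1, e2, e3] at h1
  have hsign : 0 < (u ^ (p' - q) - v ^ (p' - q)) * (u ^ (p - p') - v ^ (p - p')) := by
    rcases lt_or_gt_of_ne huv with h | h
    · exact mul_pos_of_neg_of_neg (by nlinarith [rpow_lt_rpow hu.le h hα])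
        (by nlinarith [rpow_lt_rpow hu.le h ht])
    · exact mul_pos (by nlinarith [rpow_lt_rpow hv.le h hα])
        (by nlinarith [rpow_lt_rpow hv.le h ht])
  nlinarith [mul_pos (rpow_pos_of_pos hu q) (rpow_pos_of_pos hv q)]
open Real Finset

section
variable {n : ℕ} (x : Fin n → ℝ)

noncomputable def Gfun (x : Fin n → ℝ) (c : Fin n → ℝ) (σ : Equiv.Perm (Fin n)) : ℝ :=
  ∏ i, x (σ i) ^ c i

lemma Gfun_pos (hx : ∀ i, 0 < x i) (c : Fin n → ℝ) (σ : Equiv.Perm (Fin n)) :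
    0 < Gfun x c σ :=
  Finset.prod_pos fun i _ => rpow_pos_of_pos (hx _) _

lemma Gfun_split (c : Fin n → ℝ) (i j : Fin n) (hij : i ≠ j) (σ : Equiv.Perm (Fin n)) :
    Gfun x c σ = x (σ i) ^ c i * (x (σ j) ^ c j *
      ∏ k ∈ (univ.erase i).erase j, x (σ k) ^ c k) := by
  rw [Gfun, ← Finset.mul_prod_erase univ _ (mem_univ i),
    ← Finset.mul_prod_erase (univ.erase i) _ (by simp [hij.symm] : j ∈ univ.erase i)]

lemma Gfun_swap_split (c : Fin n → ℝ) (i j : Fin n) (hij : i ≠ j) (σ : Equiv.Perm (Fin n)) :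
    Gfun x c (σ * Equiv.swap i j) = x (σ j) ^ c i * (x (σ i) ^ c j *
      ∏ k ∈ (univ.erase i).erase j, x (σ k) ^ c k) := by
  rw [Gfun_split x c i j hij]
  have h1 : (σ * Equiv.swap i j) i = σ j := by simp
  have h2 : (σ * Equiv.swap i j) j = σ i := by simp
  rw [h1, h2]
  congr 2
  refine Finset.prod_congr rfl fun k hk => ?_
  simp only [mem_erase, mem_univ] at hk
  rw [Equiv.Perm.mul_apply, Equiv.swap_apply_of_ne_of_ne hk.2.1 hk.1]

lemma sum_swap_eq (c : Fin n → ℝ) (s : Equiv.Perm (Fin n)) :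
    ∑ σ : Equiv.Perm (Fin n), Gfun x c (σ * s) = ∑ σ : Equiv.Perm (Fin n), Gfun x c σ :=
  Fintype.sum_bijective (· * s) (Group.mulRight_bijective s) _ _ fun σ => rfl

lemma step_lemma (hx : ∀ i, 0 < x i) (hnc : ∃ p q, x p ≠ x q)
    (i j : Fin n) (hij : i ≠ j) (a a' : Fin n → ℝ)
    (hoff : ∀ k, k ≠ i → k ≠ j → a' k = a k)
    (h2 : a' j ≤ a' i) (h3 : a j ≤ a' j) (hs : a i + a j = a' i + a' j)
    (hlt : a' i < a i) :
    ∑ σ : Equiv.Perm (Fin n), Gfun x a' σ < ∑ σ : Equiv.Perm (Fin n), Gfun x a σ := by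
  obtain ⟨p, q, hpq⟩ := hnc
  have hpq' : p ≠ q := fun h => hpq (by rw [h])
  -- construct σ₀ with σ₀ i = p, σ₀ j = q
  set σ₁ := Equiv.swap i p with hσ₁
  set r := σ₁ j with hr
  have hσ₁i : σ₁ i = p := Equiv.swap_apply_left i p
  have hrp : r ≠ p := by
    intro h
    apply hij
    apply σ₁.injective
    rw [hσ₁i, ← h, hr]
  set σ₂ := Equiv.swap r q with hσ₂
  set σ₀ := σ₂ * σ₁ with hσ₀
  have hσ₀i : σ₀ i = p := by
    simp only [hσ₀, Equiv.Perm.mul_apply, hσ₁, Equiv.swap_apply_left]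
    exact Equiv.swap_apply_of_ne_of_ne hrp.symm hpq'
  have hσ₀j : σ₀ j = q := by
    simp only [hσ₀, Equiv.Perm.mul_apply, ← hr, hσ₂, Equiv.swap_apply_left]
  -- pointwise comparison
  have hpt : ∀ σ : Equiv.Perm (Fin n),
      Gfun x a' σ + Gfun x a' (σ * Equiv.swap i j)
        ≤ Gfun x a σ + Gfun x a (σ * Equiv.swap i j) := by
    intro σ
    rw [Gfun_split x a i j hij σ, Gfun_swap_split x a i j hij σ,
      Gfun_split x a' i j hij σ, Gfun_swap_split x a' i j hij σ]
    have hP : (0:ℝ) < ∏ k ∈ (univ.erase i).erase j, x (σ k) ^ a k :=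
      Finset.prod_pos fun k _ => rpow_pos_of_pos (hx _) _
    have hPe : ∏ k ∈ (univ.erase i).erase j, x (σ k) ^ a' k
        = ∏ k ∈ (univ.erase i).erase j, x (σ k) ^ a k := by
      refine Finset.prod_congr rfl fun k hk => ?_
      simp only [mem_erase, mem_univ] at hk
      rw [hoff k hk.2.1 hk.1]
    rw [hPe]
    have := pair_le (x (σ i)) (x (σ j)) (a i) (a j) (a' i) (a' j)
      (hx _) (hx _) h3 h2 hlt.le hs
    nlinarith [this, hP]
  have hptlt :
      Gfun x a' σ₀ + Gfun x a' (σ₀ * Equiv.swap i j)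
        < Gfun x a σ₀ + Gfun x a (σ₀ * Equiv.swap i j) := by
    rw [Gfun_split x a i j hij σ₀, Gfun_swap_split x a i j hij σ₀,
      Gfun_split x a' i j hij σ₀, Gfun_swap_split x a' i j hij σ₀]
    have hP : (0:ℝ) < ∏ k ∈ (univ.erase i).erase j, x (σ₀ k) ^ a k :=
      Finset.prod_pos fun k _ => rpow_pos_of_pos (hx _) _
    have hPe : ∏ k ∈ (univ.erase i).erase j, x (σ₀ k) ^ a' k
        = ∏ k ∈ (univ.erase i).erase j, x (σ₀ k) ^ a k := by
      refine Finset.prod_congr rfl fun k hk => ?_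
      simp only [mem_erase, mem_univ] at hk
      rw [hoff k hk.2.1 hk.1]
    rw [hPe, hσ₀i, hσ₀j]
    have := pair_lt (x p) (x q) (a i) (a j) (a' i) (a' j)
      (hx _) (hx _) h3 h2 hlt hs hpq
    nlinarith [this, hP]
  have hsum_lt : ∑ σ : Equiv.Perm (Fin n),
      (Gfun x a' σ + Gfun x a' (σ * Equiv.swap i j))
      < ∑ σ : Equiv.Perm (Fin n), (Gfun x a σ + Gfun x a (σ * Equiv.swap i j)) :=
    Finset.sum_lt_sum (fun σ _ => hpt σ) ⟨σ₀, mem_univ _, hptlt⟩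
  rw [Finset.sum_add_distrib, Finset.sum_add_distrib,
    sum_swap_eq x a' _, sum_swap_eq x a _] at hsum_lt
  linarith

end
section
open Real Finset
variable {n : ℕ}

noncomputable def Sp (c : Fin n → ℝ) (m : ℕ) : ℝ :=
  ∑ i ∈ Finset.univ.filter (fun i : Fin n => (i : ℕ) < m), c i

lemma Sp_of_le (c : Fin n → ℝ) {m : ℕ} (hm : n ≤ m) : Sp c m = ∑ i, c i := by
  unfold Sp
  rw [Finset.filter_true_of_mem fun i _ => i.isLt.trans_le hm]

lemma Sp_succ_of_lt (c : Fin n → ℝ) {m : ℕ} (hm : m < n) :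
    Sp c (m + 1) = Sp c m + c ⟨m, hm⟩ := by
  unfold Sp
  have : Finset.univ.filter (fun i : Fin n => (i : ℕ) < m + 1)
      = insert ⟨m, hm⟩ (Finset.univ.filter (fun i : Fin n => (i : ℕ) < m)) := by
    ext i
    simp only [Finset.mem_filter, Finset.mem_univ, true_and, Finset.mem_insert]
    constructor
    · intro h
      rcases Nat.lt_succ_iff_lt_or_eq.mp h with h | h
      · exact Or.inr h
      · exact Or.inl (Fin.ext h)
    · rintro (h | h)
      · rw [h]; exact Nat.lt_succ_self m
      · exact h.trans (Nat.lt_succ_self m)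
  rw [this, Finset.sum_insert (by simp)]
  ring

lemma Sp_split (c : Fin n → ℝ) {m m' : ℕ} (h : m ≤ m') :
    Sp c m' = Sp c m + ∑ i ∈ Finset.univ.filter (fun i : Fin n => m ≤ (i : ℕ) ∧ (i : ℕ) < m'), c i := by
  unfold Sp
  rw [← Finset.sum_filter_add_sum_filter_not
    (Finset.univ.filter (fun i : Fin n => (i : ℕ) < m')) (fun i => (i : ℕ) < m)]
  congr 1
  · congr 1
    rw [Finset.filter_filter]
    apply Finset.filter_congr
    intro i _
    simp only [and_iff_right_iff_imp]
    intro hi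
    exact hi.trans_le h
  · congr 1
    rw [Finset.filter_filter]
    apply Finset.filter_congr
    intro i _
    simp only [not_lt]
    tauto

lemma Sp_sub (c d : Fin n → ℝ) (m : ℕ) : Sp (fun i => c i - d i) m = Sp c m - Sp d m :=
  Finset.sum_sub_distrib _ _

lemma Sp_update_decomp (a : Fin n → ℝ) (j k : Fin n) (hjk : j ≠ k) (δ : ℝ) (m : ℕ) :
    Sp (Function.update (Function.update a j (a j - δ)) k (a k + δ)) m
      = Sp a m + (if (j : ℕ) < m then -δ else 0) + (if (k : ℕ) < m then δ else 0) := by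
  set a' := Function.update (Function.update a j (a j - δ)) k (a k + δ) with ha'
  have hpt : ∀ i, a' i = a i + ((if i = j then -δ else 0) + (if i = k then δ else 0)) := by
    intro i
    rcases eq_or_ne i k with rfl | hik
    · simp [ha', Function.update_self, if_neg (Ne.symm hjk), hjk.symm]
    · rcases eq_or_ne i j with rfl | hij
      · simp [ha', Function.update_of_ne hik, if_neg hik]
        ring
      · simp [ha', Function.update_of_ne hik, Function.update_of_ne hij,
          if_neg hij, if_neg hik]
  unfold Sp
  rw [Finset.sum_congr rfl (fun i _ => hpt i), Finset.sum_add_distrib,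
    Finset.sum_add_distrib, Finset.sum_ite_eq' _ j (fun _ => -δ),
    Finset.sum_ite_eq' _ k (fun _ => δ)]
  simp only [Finset.mem_filter, Finset.mem_univ, true_and]
  ring
end
section
open Real Finset
variable {n : ℕ}

lemma main_aux (x : Fin n → ℝ) (hx : ∀ i, 0 < x i) (hnc : ∃ p q, x p ≠ x q)
    (b : Fin n → ℝ) (hb : Antitone b) :
    ∀ N : ℕ, ∀ a : Fin n → ℝ,
      (Finset.univ.filter (fun i => a i ≠ b i)).card ≤ N →
      (∀ m : ℕ, Sp b m ≤ Sp a m) →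
      (∑ i, a i = ∑ i, b i) →
      a ≠ b →
      ∑ σ : Equiv.Perm (Fin n), Gfun x b σ < ∑ σ : Equiv.Perm (Fin n), Gfun x a σ := by
  intro N
  induction N with
  | zero =>
    intro a hcard hpre hs hne
    exfalso
    obtain ⟨i, hi⟩ := Function.ne_iff.mp hne
    have : 0 < (Finset.univ.filter (fun i => a i ≠ b i)).card :=
      Finset.card_pos.mpr ⟨i, by simp [hi]⟩
    omega
  | succ N ih =>
    intro a hcard hpre hs hne
    have hpre' : ∀ m, 0 ≤ Sp (fun i => a i - b i) m := fun m => by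
      rw [Sp_sub]; linarith [hpre m]
    set K := Finset.univ.filter (fun i => a i < b i) with hK
    have hKne : K.Nonempty := by
      by_contra hKe
      apply hne
      rw [Finset.not_nonempty_iff_eq_empty, Finset.filter_eq_empty_iff] at hKe
      funext i
      have hle : ∀ i ∈ Finset.univ, b i ≤ a i := fun i _ => not_lt.mp (hKe (Finset.mem_univ i))
      exact ((Finset.sum_eq_sum_iff_of_le hle).mp hs.symm i (Finset.mem_univ i)).symm
    set k := K.min' hKne with hk
    have hkK : k ∈ K := Finset.min'_mem K hKne
    have hkab : a k < b k := (Finset.mem_filter.mp hkK).2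
    have hlt_k : ∀ i, i < k → b i ≤ a i := by
      intro i hik
      by_contra h
      exact absurd (Finset.min'_le K i
        (Finset.mem_filter.mpr ⟨Finset.mem_univ i, not_le.mp h⟩)) (not_le.mpr hik)
    set J := Finset.univ.filter (fun i => i < k ∧ b i < a i) with hJ
    have hJne : J.Nonempty := by
      by_contra hJe
      rw [Finset.not_nonempty_iff_eq_empty, Finset.filter_eq_empty_iff] at hJe
      have heq : ∀ i, i < k → a i = b i := by
        intro i hik
        have h2 : ¬ (b i < a i) := fun h => hJe (Finset.mem_univ i) ⟨hik, h⟩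
        exact le_antisymm (not_lt.mp h2) (hlt_k i hik)
      have hz : Sp (fun i => a i - b i) (k : ℕ) = 0 := by
        apply Finset.sum_eq_zero
        intro i hi
        have hik : i < k := Fin.lt_def.mpr (Finset.mem_filter.mp hi).2
        simp [heq i hik]
      have h1 := hpre' ((k : ℕ) + 1)
      rw [Sp_succ_of_lt _ k.isLt, hz] at h1
      simp only [Fin.eta] at h1
      linarith
    set j := J.max' hJne with hj
    have hjJ : j ∈ J := Finset.max'_mem J hJne
    obtain ⟨hjk, hjab⟩ : j < k ∧ b j < a j := (Finset.mem_filter.mp hjJ).2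
    have hmid : ∀ i, j < i → i < k → a i = b i := by
      intro i hji hik
      have h2 : ¬ (b i < a i) := by
        intro h
        exact absurd (Finset.le_max' J i
          (Finset.mem_filter.mpr ⟨Finset.mem_univ i, ⟨hik, h⟩⟩)) (not_le.mpr hji)
      exact le_antisymm (not_lt.mp h2) (hlt_k i hik)
    set δ := min (a j - b j) (b k - a k) with hδdef
    have hδ : 0 < δ := lt_min (by linarith) (by linarith)
    have hδ1 : δ ≤ a j - b j := min_le_left _ _
    have hδ2 : δ ≤ b k - a k := min_le_right _ _
    have hjkne : j ≠ k := ne_of_lt hjk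
    set a' := Function.update (Function.update a j (a j - δ)) k (a k + δ) with ha'
    have ha'j : a' j = a j - δ := by
      rw [ha', Function.update_of_ne hjkne, Function.update_self]
    have ha'k : a' k = a k + δ := by rw [ha', Function.update_self]
    have ha'other : ∀ i, i ≠ j → i ≠ k → a' i = a i := fun i hij hik => by
      rw [ha', Function.update_of_ne hik, Function.update_of_ne hij]
    have hbjk : b k ≤ b j := hb hjk.le
    have hstep : ∑ σ : Equiv.Perm (Fin n), Gfun x a' σ
        < ∑ σ : Equiv.Perm (Fin n), Gfun x a σ := by
      apply step_lemma x hx hnc j k hjkne a a' ha'other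
      · rw [ha'j, ha'k]; linarith
      · rw [ha'k]; linarith
      · rw [ha'j, ha'k]; ring
      · rw [ha'j]; linarith
    have hjkN : (j : ℕ) < (k : ℕ) := Fin.lt_def.mp hjk
    have hpre2 : ∀ m, Sp b m ≤ Sp a' m := by
      intro m
      rw [ha', Sp_update_decomp a j k hjkne δ m]
      by_cases hkm : (k : ℕ) < m
      · have hjm : (j : ℕ) < m := hjkN.trans hkm
        rw [if_pos hjm, if_pos hkm]
        linarith [hpre m]
      · by_cases hjm : (j : ℕ) < m
        · rw [if_pos hjm, if_neg hkm]
          have hsplit := Sp_split (fun i => a i - b i) (show (j : ℕ) + 1 ≤ m from hjm)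
          have hmidz : ∑ i ∈ Finset.univ.filter
              (fun i : Fin n => (j : ℕ) + 1 ≤ (i : ℕ) ∧ (i : ℕ) < m),
              (a i - b i) = 0 := by
            apply Finset.sum_eq_zero
            intro i hi
            obtain ⟨h1, h2⟩ := (Finset.mem_filter.mp hi).2
            have hji : j < i := Fin.lt_def.mpr (by omega)
            have hik : i < k := Fin.lt_def.mpr (h2.trans_le (not_lt.mp hkm))
            simp [hmid i hji hik]
          have hsucc := Sp_succ_of_lt (fun i => a i - b i) j.isLt
          simp only [Fin.eta] at hsucc
          have h0 := hpre' (j : ℕ)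
          have hfm : Sp (fun i => a i - b i) m = Sp a m - Sp b m := Sp_sub a b m
          have hfj1 : Sp (fun i => a i - b i) ((j : ℕ) + 1)
              = Sp (fun i => a i - b i) (j : ℕ) + (a j - b j) := hsucc
          rw [hmidz, add_zero] at hsplit
          linarith
        · rw [if_neg hjm, if_neg hkm]
          linarith [hpre m]
    have hsum2 : ∑ i, a' i = ∑ i, b i := by
      have h1 : Sp a' n = Sp a n + -δ + δ := by
        rw [ha', Sp_update_decomp a j k hjkne δ n, if_pos j.isLt, if_pos k.isLt]
      rw [← Sp_of_le a' le_rfl, h1, Sp_of_le a le_rfl]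
      linarith [hs]
    have hsub : Finset.univ.filter (fun i => a' i ≠ b i)
        ⊂ Finset.univ.filter (fun i => a i ≠ b i) := by
      rw [Finset.ssubset_def]
      constructor
      · intro i hi
        simp only [Finset.mem_filter, Finset.mem_univ, true_and] at hi ⊢
        rcases eq_or_ne i j with rfl | hij
        · exact ne_of_gt hjab
        · rcases eq_or_ne i k with rfl | hik
          · exact ne_of_lt hkab
          · rwa [ha'other i hij hik] at hi
      · intro hsup
        rcases min_cases (a j - b j) (b k - a k) with ⟨hmin, _⟩ | ⟨hmin, _⟩
        · have hj0 : a' j = b j := by rw [ha'j, hδdef, hmin]; ring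
          have hjold : j ∈ Finset.univ.filter (fun i => a i ≠ b i) := by
            simp [ne_of_gt hjab]
          have := hsup hjold
          simp only [Finset.mem_filter, Finset.mem_univ, true_and] at this
          exact this hj0
        · have hk0 : a' k = b k := by rw [ha'k, hδdef, hmin]; ring
          have hkold : k ∈ Finset.univ.filter (fun i => a i ≠ b i) := by
            simp [ne_of_lt hkab]
          have := hsup hkold
          simp only [Finset.mem_filter, Finset.mem_univ, true_and] at this
          exact this hk0
    have hcard2 : (Finset.univ.filter (fun i => a' i ≠ b i)).card ≤ N := by
      have := Finset.card_lt_card hsub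
      omega
    by_cases hab : a' = b
    · rw [← hab]; exact hstep
    · exact lt_trans (ih a' hcard2 hpre2 hsum2 hab) hstep
end

theorem stmt_9 (n : ℕ) (a b : Fin n → ℝ)
    (ha0 : ∀ i, 0 ≤ a i) (hb0 : ∀ i, 0 ≤ b i)
    (ha : Antitone a) (hb : Antitone b)
    (hmaj : ∀ k : ℕ, k < n →
      ∑ i ∈ Finset.univ.filter (fun i : Fin n => (i : ℕ) < k), b i
        ≤ ∑ i ∈ Finset.univ.filter (fun i : Fin n => (i : ℕ) < k), a i)
    (hsum : ∑ i, b i = ∑ i, a i) (hne : b ≠ a)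
    (x : Fin n → ℝ) (hx : ∀ i, 0 < x i) (hnc : ∃ p q, x p ≠ x q) :
    (1 / (Nat.factorial n : ℝ)) * ∑ σ : Equiv.Perm (Fin n), ∏ i, x (σ i) ^ b i
      < (1 / (Nat.factorial n : ℝ)) * ∑ σ : Equiv.Perm (Fin n), ∏ i, x (σ i) ^ a i := by
  have hab : a ≠ b := fun h => hne h.symm
  have hpre : ∀ m : ℕ, Sp b m ≤ Sp a m := by
    intro m
    rcases lt_or_ge m n with h | h
    · exact hmaj m h
    · rw [Sp_of_le b h, Sp_of_le a h]
      exact le_of_eq hsum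
  have hmain := main_aux x hx hnc b hb
    (Finset.univ.filter (fun i => a i ≠ b i)).card a le_rfl hpre hsum.symm hab
  simp only [Gfun] at hmain
  have hfac : (0:ℝ) < 1 / (Nat.factorial n : ℝ) := by positivity
  exact mul_lt_mul_of_pos_left hmain hfac
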